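/- With the gluing data as in the context, let {Q_i : i ∈ I} be open subsets Q_i ⊆ O_i satisfying conditions (a), (b), (c), (d), (e) for all i, j, k ∈ I. Let X be the disjoint union of the Q_i, let R be the equivalence relation on X generated by (i,x) ~ (j, φ_ij(x)) for x ∈ Q_ij, and let M' = X/R be the quotient topological space. Then: (1) M' is Hausdorff; (2) for each i ∈ I, the composite map Q_i → X → M' is an open topological embedding; (3) the map j : M → M' sending x ∈ M to the class of (i, (x,0)) for any i ∈ I with x ∈ U_i is well-defined (independent of the choice of i) and is a closed topological embedding of M into M'. -/

import Mathlib

open Set Topology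

/-- The model fibre `ℂⁿ`. -/
abbrev ComplexN (n : ℕ) : Type := EuclideanSpace ℂ (Fin n)

/-- Gluing data, as in Ciocan-Fontanine–Iritani: a locally compact, first-countable Hausdorff
space `M` with open covers `{Uᵢ}`, `{Vᵢ}`, `{Wᵢ}` satisfying `Uᵢ ⋐ Vᵢ ⋐ Wᵢ`, `{Vᵢ}` locally
finite, together with open neighbourhoods `Nᵢⱼ` of `Wᵢⱼ × {0}` in `Wᵢⱼ × ℂⁿ` and homeomorphisms
`φᵢⱼ : Nᵢⱼ → Nⱼᵢ` (encoded as globally defined functions) restricting to the identity on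
`Wᵢⱼ × {0}`, with `φⱼᵢ = φᵢⱼ⁻¹`, `Nᵢᵢ = Wᵢ × ℂⁿ` and `φᵢᵢ = id`. -/
structure GluingData (M : Type*) [TopologicalSpace M] (n : ℕ) (I : Type*) where
  U : I → Set M
  V : I → Set M
  W : I → Set M
  isOpen_U : ∀ i, IsOpen (U i)
  isOpen_V : ∀ i, IsOpen (V i)
  isOpen_W : ∀ i, IsOpen (W i)
  cover_U : ⋃ i, U i = univ
  cover_V : ⋃ i, V i = univ
  cover_W : ⋃ i, W i = univ
  U_compactClosure : ∀ i, IsCompact (closure (U i))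
  closure_U_subset : ∀ i, closure (U i) ⊆ V i
  V_compactClosure : ∀ i, IsCompact (closure (V i))
  closure_V_subset : ∀ i, closure (V i) ⊆ W i
  locallyFinite_V : LocallyFinite V
  N : I → I → Set (M × ComplexN n)
  isOpen_N : ∀ i j, IsOpen (N i j)
  N_subset : ∀ i j, N i j ⊆ (W i ∩ W j) ×ˢ univ
  zeroSection_subset_N : ∀ i j, (W i ∩ W j) ×ˢ ({0} : Set (ComplexN n)) ⊆ N i j
  φ : I → I → M × ComplexN n → M × ComplexN n
  continuousOn_φ : ∀ i j, ContinuousOn (φ i j) (N i j)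
  φ_image : ∀ i j, φ i j '' N i j = N j i
  φ_leftInv : ∀ i j, ∀ x ∈ N i j, φ j i (φ i j x) = x
  φ_id_zeroSection : ∀ i j, ∀ x ∈ (W i ∩ W j) ×ˢ ({0} : Set (ComplexN n)), φ i j x = x
  N_self : ∀ i, N i i = W i ×ˢ univ
  φ_self : ∀ i, ∀ x ∈ N i i, φ i i x = x

namespace GluingData

variable {M : Type*} [TopologicalSpace M] {n : ℕ} {I : Type*} (D : GluingData M n I)

/-- `Oᵢ := Vᵢ × ℂⁿ`. -/
def O (i : I) : Set (M × ComplexN n) := D.V i ×ˢ univ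

/-- `Oᵢⱼ := (Vᵢⱼ × ℂⁿ) ∩ Nᵢⱼ ∩ φᵢⱼ⁻¹(Vᵢⱼ × ℂⁿ)`. -/
def Oij (i j : I) : Set (M × ComplexN n) :=
  ((D.V i ∩ D.V j) ×ˢ univ) ∩ D.N i j ∩ D.φ i j ⁻¹' ((D.V i ∩ D.V j) ×ˢ univ)

/-- `Qᵢⱼ := Qᵢ ∩ Oᵢⱼ ∩ φᵢⱼ⁻¹(Qⱼ)`. -/
def Qij (Q : I → Set (M × ComplexN n)) (i j : I) : Set (M × ComplexN n) :=
  Q i ∩ D.Oij i j ∩ D.φ i j ⁻¹' (Q j)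

/-- Condition (a): `Qᵢ ⋐ Oᵢ`. -/
def CondA (Q : I → Set (M × ComplexN n)) : Prop :=
  ∀ i, IsCompact (closure (Q i)) ∧ closure (Q i) ⊆ D.O i

/-- Condition (b): `Uᵢ × {0} ⊆ Qᵢ ⊆ Uᵢ × ℂⁿ`. -/
def CondB (Q : I → Set (M × ComplexN n)) : Prop :=
  ∀ i, D.U i ×ˢ ({0} : Set (ComplexN n)) ⊆ Q i ∧ Q i ⊆ D.U i ×ˢ univ

/-- Condition (c): `Qᵢⱼ ⋐ Oᵢⱼ`. -/
def CondC (Q : I → Set (M × ComplexN n)) : Prop :=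
  ∀ i j, IsCompact (closure (D.Qij Q i j)) ∧ closure (D.Qij Q i j) ⊆ D.Oij i j

/-- Condition (d): `Qᵢⱼ ∩ Qᵢₖ ⊆ φᵢⱼ⁻¹(Oⱼₖ)`. -/
def CondD (Q : I → Set (M × ComplexN n)) : Prop :=
  ∀ i j k, D.Qij Q i j ∩ D.Qij Q i k ⊆ D.φ i j ⁻¹' (D.Oij j k)

/-- Condition (e): `φⱼₖ ∘ φᵢⱼ = φᵢₖ` on `Qᵢⱼ ∩ Qᵢₖ`. -/
def CondE (Q : I → Set (M × ComplexN n)) : Prop :=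
  ∀ i j k, ∀ x ∈ D.Qij Q i j ∩ D.Qij Q i k, D.φ j k (D.φ i j x) = D.φ i k x

end GluingData

section Helpers

open Relation

variable {M : Type*} [TopologicalSpace M] {n : ℕ} {I : Type*}
  (D : GluingData M n I) (Q : I → Set (M × ComplexN n))

lemma GD_U_subset_V (i : I) : D.U i ⊆ D.V i :=
  subset_closure.trans (D.closure_U_subset i)

lemma GD_V_subset_W (i : I) : D.V i ⊆ D.W i :=
  subset_closure.trans (D.closure_V_subset i)

lemma GD_Oij_subset_N (i j : I) : D.Oij i j ⊆ D.N i j := fun _ h => h.1.2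

lemma GD_isOpen_Oij (i j : I) : IsOpen (D.Oij i j) := by
  have h1 : IsOpen (((D.V i ∩ D.V j) ×ˢ (univ : Set (ComplexN n)))) :=
    ((D.isOpen_V i).inter (D.isOpen_V j)).prod isOpen_univ
  have h2 : IsOpen (D.N i j ∩ D.φ i j ⁻¹' ((D.V i ∩ D.V j) ×ˢ univ)) :=
    (D.continuousOn_φ i j).isOpen_inter_preimage (D.isOpen_N i j) h1
  have heq : D.Oij i j
      = ((D.V i ∩ D.V j) ×ˢ univ) ∩ (D.N i j ∩ D.φ i j ⁻¹' ((D.V i ∩ D.V j) ×ˢ univ)) := by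
    rw [GluingData.Oij, inter_assoc]
  rw [heq]; exact h1.inter h2

lemma GD_Qij_subset_N (i j : I) : D.Qij Q i j ⊆ D.N i j := fun _ h => h.1.2.1.2

lemma GD_isOpen_Qij (hQopen : ∀ i, IsOpen (Q i)) (i j : I) : IsOpen (D.Qij Q i j) := by
  have h2 : IsOpen (D.N i j ∩ D.φ i j ⁻¹' Q j) :=
    (D.continuousOn_φ i j).isOpen_inter_preimage (D.isOpen_N i j) (hQopen j)
  have heq : D.Qij Q i j = (Q i ∩ D.Oij i j) ∩ (D.N i j ∩ D.φ i j ⁻¹' Q j) := by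
    ext z
    constructor
    · rintro ⟨⟨h1, h2⟩, h3⟩
      exact ⟨⟨h1, h2⟩, h2.1.2, h3⟩
    · rintro ⟨⟨h1, h2⟩, _, h3⟩
      exact ⟨⟨h1, h2⟩, h3⟩
  rw [heq]
  exact ((hQopen i).inter (GD_isOpen_Oij D i j)).inter h2

lemma GD_mem_Qij_self (hQsub : ∀ i, Q i ⊆ D.O i) {i : I} {z : M × ComplexN n}
    (hz : z ∈ Q i) : z ∈ D.Qij Q i i := by
  have hzV : z ∈ D.V i ×ˢ (univ : Set (ComplexN n)) := hQsub i hz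
  have hzN : z ∈ D.N i i := by
    rw [D.N_self i]
    exact ⟨GD_V_subset_W D i hzV.1, trivial⟩
  have hφ : D.φ i i z = z := D.φ_self i z hzN
  refine ⟨⟨hz, ⟨⟨⟨hzV.1, hzV.1⟩, trivial⟩, hzN⟩, ?_⟩, ?_⟩
  · rw [mem_preimage, hφ]; exact ⟨⟨hzV.1, hzV.1⟩, trivial⟩
  · rw [mem_preimage, hφ]; exact hz

lemma GD_Qij_symm {i j : I} {z : M × ComplexN n} (hz : z ∈ D.Qij Q i j) :
    D.φ i j z ∈ D.Qij Q j i ∧ D.φ j i (D.φ i j z) = z := by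
  obtain ⟨⟨hQi, ⟨⟨hV, hN⟩, hVpre⟩⟩, hQj⟩ := hz
  have hNji : D.φ i j z ∈ D.N j i := by
    rw [← D.φ_image i j]; exact Set.mem_image_of_mem _ hN
  have hinv : D.φ j i (D.φ i j z) = z := D.φ_leftInv i j z hN
  have hφV := mem_preimage.mp hVpre
  refine ⟨⟨⟨mem_preimage.mp hQj, ⟨⟨⟨hφV.1.2, hφV.1.1⟩, trivial⟩, hNji⟩, ?_⟩, ?_⟩, hinv⟩
  · rw [mem_preimage, hinv]; exact ⟨⟨hV.1.2, hV.1.1⟩, trivial⟩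
  · rw [mem_preimage, hinv]; exact hQi

lemma GD_Qij_trans (hd : D.CondD Q) (he : D.CondE Q) {i j k : I} {z : M × ComplexN n}
    (hij : z ∈ D.Qij Q i j) (hjk : D.φ i j z ∈ D.Qij Q j k) :
    z ∈ D.Qij Q i k ∧ D.φ j k (D.φ i j z) = D.φ i k z := by
  have hsym := GD_Qij_symm D Q hij
  have hmem : D.φ i j z ∈ D.Qij Q j i ∩ D.Qij Q j k := ⟨hsym.1, hjk⟩
  have hE := he j i k _ hmem
  rw [hsym.2] at hE
  have hD := hd j i k hmem
  rw [mem_preimage, hsym.2] at hD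
  have hzQik : z ∈ D.Qij Q i k := by
    refine ⟨⟨hij.1.1, hD⟩, ?_⟩
    rw [mem_preimage, hE]
    exact mem_preimage.mp hjk.2
  exact ⟨hzQik, hE.symm⟩

variable (R₀ : (Σ i : I, ↥(Q i)) → (Σ i : I, ↥(Q i)) → Prop)
variable (hR₀ : ∀ a b, R₀ a b ↔
    ∃ _ : (a.2 : M × ComplexN n) ∈ D.Qij Q a.1 b.1,
      (b.2 : M × ComplexN n) = D.φ a.1 b.1 a.2)

include hR₀ in
lemma GD_equivalence (hQsub : ∀ i, Q i ⊆ D.O i) (hd : D.CondD Q) (he : D.CondE Q) :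
    Equivalence R₀ := by
  constructor
  · rintro ⟨i, x⟩
    rw [hR₀]
    have hmem : (x : M × ComplexN n) ∈ D.Qij Q i i := GD_mem_Qij_self D Q hQsub x.2
    refine ⟨hmem, ?_⟩
    exact (D.φ_self i x (GD_Qij_subset_N D Q i i hmem)).symm
  · rintro ⟨i, x⟩ ⟨j, y⟩ h
    rw [hR₀] at h ⊢
    obtain ⟨hx, hy⟩ := h
    have hsym := GD_Qij_symm D Q hx
    refine ⟨by rw [hy]; exact hsym.1, by rw [hy]; exact hsym.2.symm⟩
  · rintro ⟨i, x⟩ ⟨j, y⟩ ⟨k, z⟩ h1 h2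
    rw [hR₀] at h1 h2 ⊢
    obtain ⟨hx, hy⟩ := h1
    obtain ⟨hy', hz⟩ := h2
    rw [hy] at hy' hz
    have htr := GD_Qij_trans D Q hd he hx hy'
    exact ⟨htr.1, by rw [hz, htr.2]⟩

include hR₀ in
lemma GD_mk_eq (hQsub : ∀ i, Q i ⊆ D.O i) (hd : D.CondD Q) (he : D.CondE Q)
    {a b : Σ i : I, ↥(Q i)} :
    Quot.mk R₀ a = Quot.mk R₀ b ↔ R₀ a b := by
  rw [Quot.eq]
  exact (GD_equivalence D Q R₀ hR₀ hQsub hd he).eqvGen_iff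

include hR₀ in
lemma GD_isOpen_sat (hQopen : ∀ i, IsOpen (Q i)) (hQsub : ∀ i, Q i ⊆ D.O i)
    (hd : D.CondD Q) (he : D.CondE Q) (i : I) (A : Set (M × ComplexN n)) (hA : IsOpen A) :
    IsOpen {p : Quot R₀ | ∃ x : ↥(Q i), (x : M × ComplexN n) ∈ A ∧ p = Quot.mk R₀ ⟨i, x⟩} := by
  rw [← isQuotientMap_quot_mk.isOpen_preimage, isOpen_sigma_iff]
  intro j
  have heq : (Sigma.mk j ⁻¹' (Quot.mk R₀ ⁻¹'
      {p : Quot R₀ | ∃ x : ↥(Q i), (x : M × ComplexN n) ∈ A ∧ p = Quot.mk R₀ ⟨i, x⟩}))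
      = Subtype.val ⁻¹' (D.Qij Q j i ∩ (D.N j i ∩ D.φ j i ⁻¹' A)) := by
    ext y
    simp only [mem_preimage, mem_setOf_eq, mem_inter_iff]
    constructor
    · rintro ⟨x, hxA, hmk⟩
      have hR := (GD_mk_eq D Q R₀ hR₀ hQsub hd he).mp hmk
      rw [hR₀] at hR
      obtain ⟨hq, hx⟩ := hR
      exact ⟨hq, GD_Qij_subset_N D Q j i hq, by rw [← hx]; exact hxA⟩
    · rintro ⟨hq, _, hφA⟩
      refine ⟨⟨D.φ j i y, mem_preimage.mp hq.2⟩, hφA, ?_⟩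
      exact ((GD_mk_eq D Q R₀ hR₀ hQsub hd he).mpr ((hR₀ _ _).mpr ⟨hq, rfl⟩))
  rw [heq]
  exact ((GD_isOpen_Qij D Q hQopen j i).inter
    ((D.continuousOn_φ j i).isOpen_inter_preimage (D.isOpen_N j i) hA)).preimage
    continuous_subtype_val

end Helpers
/-- With the gluing data as in the context, let `Qᵢ ⊆ Oᵢ` be open subsets satisfying conditions
(a)–(e).  Let `X` be the topological sum of the `Qᵢ`, let `R₀` be the relation
`(i,x) ~ (j, φᵢⱼ(x))` for `x ∈ Qᵢⱼ`, and let `M' = X / ∼` be the quotient by the equivalence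
relation generated by `R₀`.  Then `M'` is Hausdorff, each `Qᵢ → M'` is an open embedding, and
the canonical map `M → M'`, `x ↦ [(i, (x,0))]` for any `i` with `x ∈ Uᵢ`, is well defined and a
closed embedding. -/
theorem quotient_hausdorff_openEmbedding_closedEmbedding {M : Type*} [TopologicalSpace M]
    [T2Space M] [LocallyCompactSpace M] [FirstCountableTopology M] {n : ℕ} {I : Type*}
    (D : GluingData M n I) (Q : I → Set (M × ComplexN n))
    (hQopen : ∀ i, IsOpen (Q i)) (hQsub : ∀ i, Q i ⊆ D.O i)
    (ha : D.CondA Q) (hb : D.CondB Q) (hc : D.CondC Q) (hd : D.CondD Q) (he : D.CondE Q)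
    (R₀ : (Σ i : I, ↥(Q i)) → (Σ i : I, ↥(Q i)) → Prop)
    (hR₀ : ∀ a b, R₀ a b ↔
      ∃ _ : (a.2 : M × ComplexN n) ∈ D.Qij Q a.1 b.1,
        (b.2 : M × ComplexN n) = D.φ a.1 b.1 a.2) :
    T2Space (Quot R₀) ∧
    (∀ i : I, IsOpenEmbedding (fun x : ↥(Q i) => Quot.mk R₀ ⟨i, x⟩)) ∧
    ∃ j : M → Quot R₀,
      (∀ (i : I) (x : M) (_ : x ∈ D.U i) (hmem : ((x, 0) : M × ComplexN n) ∈ Q i),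
        j x = Quot.mk R₀ ⟨i, ⟨(x, 0), hmem⟩⟩) ∧
      IsClosedEmbedding j := by
  classical
  have hmkeq : ∀ a b, Quot.mk R₀ a = Quot.mk R₀ b ↔ R₀ a b :=
    fun _ _ => GD_mk_eq D Q R₀ hR₀ hQsub hd he
  -- Part 2 : open embeddings
  have hopenemb : ∀ i : I, IsOpenEmbedding (fun x : ↥(Q i) => Quot.mk R₀ ⟨i, x⟩) := by
    intro i
    apply IsOpenEmbedding.of_continuous_injective_isOpenMap
    · exact continuous_quot_mk.comp continuous_sigmaMk
    · intro x y hxy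
      have hR := (hmkeq _ _).mp hxy
      rw [hR₀] at hR
      obtain ⟨hq, hy⟩ := hR
      have hN : (x : M × ComplexN n) ∈ D.N i i := GD_Qij_subset_N D Q i i hq
      apply Subtype.ext
      rw [hy, D.φ_self i _ hN]
    · intro s hs
      obtain ⟨A, hA, hsA⟩ := isOpen_induced_iff.mp hs
      have heq : (fun x : ↥(Q i) => Quot.mk R₀ ⟨i, x⟩) '' s
          = {p : Quot R₀ | ∃ x : ↥(Q i), (x : M × ComplexN n) ∈ A ∧ p = Quot.mk R₀ ⟨i, x⟩} := by
        ext p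
        constructor
        · rintro ⟨x, hxs, rfl⟩
          exact ⟨x, by rw [← hsA] at hxs; exact hxs, rfl⟩
        · rintro ⟨x, hxA, rfl⟩
          exact ⟨x, by rw [← hsA]; exact hxA, rfl⟩
      rw [heq]
      exact GD_isOpen_sat D Q R₀ hR₀ hQopen hQsub hd he i A hA
  -- Part 1 : Hausdorff
  have hT2 : T2Space (Quot R₀) := by
    constructor
    intro p q hpq
    obtain ⟨⟨i, x⟩, rfl⟩ := Quot.exists_rep p
    obtain ⟨⟨j, y⟩, rfl⟩ := Quot.exists_rep q
    have hne : ¬ R₀ ⟨i, x⟩ ⟨j, y⟩ := fun h => hpq ((hmkeq _ _).mpr h)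
    obtain ⟨A, B, hA, hB, hxA, hyB, hsep⟩ :
        ∃ A B : Set (M × ComplexN n), IsOpen A ∧ IsOpen B ∧ (x : M × ComplexN n) ∈ A ∧
          (y : M × ComplexN n) ∈ B ∧
          ∀ z ∈ A, z ∈ D.Qij Q i j → D.φ i j z ∉ B := by
      by_cases hx : (x : M × ComplexN n) ∈ closure (D.Qij Q i j)
      · have hxO : (x : M × ComplexN n) ∈ D.Oij i j := (hc i j).2 hx
        have hxN : (x : M × ComplexN n) ∈ D.N i j := GD_Oij_subset_N D i j hxO
        have hyne : (y : M × ComplexN n) ≠ D.φ i j x := by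
          intro h
          apply hne
          rw [hR₀]
          refine ⟨⟨⟨x.2, hxO⟩, ?_⟩, h⟩
          rw [mem_preimage, ← h]
          exact y.2
        obtain ⟨B, B', hB, hB', hyB, hφB', hdisj⟩ := t2_separation hyne
        refine ⟨D.N i j ∩ D.φ i j ⁻¹' B', B,
          (D.continuousOn_φ i j).isOpen_inter_preimage (D.isOpen_N i j) hB', hB,
          ⟨hxN, hφB'⟩, hyB, ?_⟩
        intro z hz _ hzB
        exact (Set.disjoint_left.mp hdisj hzB) hz.2
      · exact ⟨(closure (D.Qij Q i j))ᶜ, univ, isClosed_closure.isOpen_compl, isOpen_univ,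
          hx, trivial, fun z hz hzq _ => hz (subset_closure hzq)⟩
    refine ⟨{p | ∃ x' : ↥(Q i), (x' : M × ComplexN n) ∈ A ∧ p = Quot.mk R₀ ⟨i, x'⟩},
            {p | ∃ y' : ↥(Q j), (y' : M × ComplexN n) ∈ B ∧ p = Quot.mk R₀ ⟨j, y'⟩},
            GD_isOpen_sat D Q R₀ hR₀ hQopen hQsub hd he i A hA,
            GD_isOpen_sat D Q R₀ hR₀ hQopen hQsub hd he j B hB,
            ⟨x, hxA, rfl⟩, ⟨y, hyB, rfl⟩, ?_⟩
    rw [Set.disjoint_left]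
    rintro p ⟨x', hx'A, rfl⟩ ⟨y', hy'B, hpeq⟩
    have hR := (hmkeq _ _).mp hpeq
    rw [hR₀] at hR
    obtain ⟨hq, hy'⟩ := hR
    exact hsep x' hx'A hq (hy' ▸ hy'B)
  -- Part 3 : the closed embedding j
  have hcov : ∀ x : M, ∃ i, x ∈ D.U i := fun x => by
    have h := D.cover_U
    rw [iUnion_eq_univ_iff] at h
    exact h x
  choose c hc using hcov
  have hQ0 : ∀ (i : I) (x : M), x ∈ D.U i → ((x, 0) : M × ComplexN n) ∈ Q i :=
    fun i x hx => (hb i).1 ⟨hx, rfl⟩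
  set j : M → Quot R₀ := fun x => Quot.mk R₀ ⟨c x, ⟨(x, 0), hQ0 _ _ (hc x)⟩⟩ with hjdef
  have hrel : ∀ (i k : I) (x : M) (hi : x ∈ D.U i) (hk : x ∈ D.U k),
      R₀ ⟨i, ⟨(x, 0), hQ0 i x hi⟩⟩ ⟨k, ⟨(x, 0), hQ0 k x hk⟩⟩ := by
    intro i k x hi hk
    rw [hR₀]
    have hW : ((x, 0) : M × ComplexN n) ∈ (D.W i ∩ D.W k) ×ˢ ({0} : Set (ComplexN n)) :=
      ⟨⟨GD_V_subset_W D i (GD_U_subset_V D i hi), GD_V_subset_W D k (GD_U_subset_V D k hk)⟩, rfl⟩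
    have hφ : D.φ i k ((x, 0)) = ((x, 0) : M × ComplexN n) := D.φ_id_zeroSection i k _ hW
    have hN : ((x, 0) : M × ComplexN n) ∈ D.N i k := D.zeroSection_subset_N i k hW
    have hV : ((x, 0) : M × ComplexN n) ∈ (D.V i ∩ D.V k) ×ˢ (univ : Set (ComplexN n)) :=
      ⟨⟨GD_U_subset_V D i hi, GD_U_subset_V D k hk⟩, trivial⟩
    refine ⟨⟨⟨hQ0 i x hi, ⟨⟨hV, hN⟩, ?_⟩⟩, ?_⟩, hφ.symm⟩
    · rw [mem_preimage, hφ]; exact hV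
    · rw [mem_preimage, hφ]; exact hQ0 k x hk
  have jspec : ∀ (i : I) (x : M) (_ : x ∈ D.U i) (hmem : ((x, 0) : M × ComplexN n) ∈ Q i),
      j x = Quot.mk R₀ ⟨i, ⟨(x, 0), hmem⟩⟩ := by
    intro i x hx hmem
    exact (hmkeq _ _).mpr (hrel (c x) i x (hc x) hx)
  have hjinj : Function.Injective j := by
    intro x y hxy
    have hR := (hmkeq _ _).mp hxy
    rw [hR₀] at hR
    obtain ⟨hq, heq2⟩ := hR
    have hN := GD_Qij_subset_N D Q _ _ hq
    have hW := D.N_subset _ _ hN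
    have hφ : D.φ (c x) (c y) ((x, 0)) = ((x, 0) : M × ComplexN n) :=
      D.φ_id_zeroSection _ _ _ ⟨hW.1, rfl⟩
    rw [hφ] at heq2
    exact (Prod.ext_iff.mp heq2.symm).1
  have hjcont : Continuous j := by
    rw [continuous_iff_continuousAt]
    intro x
    apply ContinuousOn.continuousAt _ ((D.isOpen_U (c x)).mem_nhds (hc x))
    rw [continuousOn_iff_continuous_restrict]
    have heq : Set.restrict (D.U (c x)) j
        = (fun z : ↥(Q (c x)) => Quot.mk R₀ ⟨c x, z⟩)
          ∘ (fun u : ↥(D.U (c x)) => (⟨((u : M), 0), hQ0 _ _ u.2⟩ : ↥(Q (c x)))) := by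
      funext u
      exact jspec (c x) u u.2 _
    change Continuous (Set.restrict (D.U (c x)) j)
    rw [heq]
    exact (continuous_quot_mk.comp continuous_sigmaMk).comp
      (Continuous.subtype_mk (continuous_subtype_val.prodMk continuous_const) _)
  have hjclosed : IsClosedMap j := by
    intro C hC
    rw [← isQuotientMap_quot_mk.isClosed_preimage, isClosed_sigma_iff]
    intro k
    have heq : Sigma.mk k ⁻¹' (Quot.mk R₀ ⁻¹' (j '' C))
        = Subtype.val ⁻¹' (C ×ˢ ({0} : Set (ComplexN n))) := by
      ext z
      simp only [mem_preimage, mem_image]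
      constructor
      · rintro ⟨x, hxC, hjx⟩
        have hR := (hmkeq _ _).mp hjx
        rw [hR₀] at hR
        obtain ⟨hq, hz⟩ := hR
        have hN := GD_Qij_subset_N D Q _ _ hq
        have hW := D.N_subset _ _ hN
        have hφ : D.φ (c x) k ((x, 0)) = ((x, 0) : M × ComplexN n) :=
          D.φ_id_zeroSection _ _ _ ⟨hW.1, rfl⟩
        rw [hφ] at hz
        rw [hz]
        exact ⟨hxC, rfl⟩
      · rintro ⟨hzC, hz0⟩
        refine ⟨(z : M × ComplexN n).1, hzC, ?_⟩
        have hzz : (z : M × ComplexN n) = (((z : M × ComplexN n).1, 0) : M × ComplexN n) :=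
          Prod.ext rfl hz0
        have hmem : ((((z : M × ComplexN n).1, 0)) : M × ComplexN n) ∈ Q k := hzz ▸ z.2
        have hU : (z : M × ComplexN n).1 ∈ D.U k := ((hb k).2 z.2).1
        rw [jspec k _ hU hmem]
        exact congrArg (fun w : ↥(Q k) => Quot.mk R₀ ⟨k, w⟩) (Subtype.ext hzz.symm)
    rw [heq]
    exact (hC.prod isClosed_singleton).preimage continuous_subtype_val
  exact ⟨hT2, hopenemb, j, jspec,
    IsClosedEmbedding.of_continuous_injective_isClosedMap hjcont hjinj hjclosed⟩
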